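/- For any (κ, 0, c) with κ > 0 and c ∈ l³ nonincreasing nonnegative (or κ = 0 and c ∈ l³ \ l²), there exists a sequence of finite nonincreasing nonnegative vectors x^{(n)} such that σ3(x^{(n)})/σ2(x^{(n)})³ → κ + ∑_j cj³, x_j^{(n)}/σ2(x^{(n)}) → cj for every j, and σ2(x^{(n)}) → 0 as n → ∞. -/

import Mathlib

open Filter
open Finset

noncomputable section Stmt16Aux

namespace Stmt16

/-- small threshold `1/(n+1)`. -/
def θ (n : ℕ) : ℝ := ((n : ℝ) + 1)⁻¹

lemma θ_pos (n : ℕ) : 0 < θ n := by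
  have : (0:ℝ) < (n:ℝ) + 1 := by positivity
  exact inv_pos.mpr this

lemma θ_tendsto : Filter.Tendsto θ atTop (nhds 0) := by
  unfold θ
  simpa [one_div] using tendsto_one_div_add_atTop_nhds_zero_nat (𝕜 := ℝ)

variable (κ : ℝ) (c : ℕ → ℝ)

/-- number of "large" entries (those `≥ θ n`). -/
def kk (n : ℕ) : ℕ := sInf {j | c j < θ n}

/-- number of small blocks. -/
def mm (n : ℕ) : ℕ := ⌈κ * ((n : ℝ) + 1) ^ 3⌉₊

def NN (n : ℕ) : ℕ := kk c n + mm κ n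

def Q (n : ℕ) : ℝ := ∑ j ∈ range (NN κ c n), max (c j) (θ n) ^ 2

def P3 (n : ℕ) : ℝ := ∑ j ∈ range (NN κ c n), max (c j) (θ n) ^ 3

def x (n j : ℕ) : ℝ := if j < NN κ c n then (Q κ c n)⁻¹ * max (c j) (θ n) else 0

variable {κ c}
variable (hcnn : ∀ j, 0 ≤ c j) (hcmono : Antitone c)
  (hsum3 : Summable (fun j => c j ^ 3))

include hcnn hsum3 in
lemma exists_lt (n : ℕ) : ({j | c j < θ n}).Nonempty := by
  have h0 : Filter.Tendsto (fun j => c j ^ 3) atTop (nhds 0) := hsum3.tendsto_atTop_zero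
  have hev : ∀ᶠ j in atTop, c j ^ 3 < θ n ^ 3 :=
    h0.eventually_lt_const (pow_pos (θ_pos n) 3)
  obtain ⟨j, hj⟩ := hev.exists
  exact ⟨j, lt_of_pow_lt_pow_left₀ 3 (θ_pos n).le hj⟩

include hcnn hsum3 in
lemma c_kk_lt (n : ℕ) : c (kk c n) < θ n := Nat.sInf_mem (exists_lt hcnn hsum3 n)

lemma θ_le_of_lt_kk {n j : ℕ} (hj : j < kk c n) : θ n ≤ c j :=
  le_of_not_gt (Nat.notMem_of_lt_sInf hj)

include hcnn hsum3 hcmono in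
lemma max_eq_small {n j : ℕ} (hj : kk c n ≤ j) : max (c j) (θ n) = θ n :=
  max_eq_right (le_of_lt (lt_of_le_of_lt (hcmono hj) (c_kk_lt hcnn hsum3 n)))

lemma max_eq_big {n j : ℕ} (hj : j < kk c n) : max (c j) (θ n) = c j :=
  max_eq_left (θ_le_of_lt_kk hj)


lemma Q_nonneg (n : ℕ) : 0 ≤ Q κ c n :=
  Finset.sum_nonneg fun j _ => sq_nonneg _

lemma x_nonneg (hcnn : ∀ j, 0 ≤ c j) (n j : ℕ) : 0 ≤ x κ c n j := by
  unfold x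
  split
  · exact mul_nonneg (inv_nonneg.mpr (Q_nonneg n)) (le_trans (hcnn j) (le_max_left _ _))
  · exact le_refl 0

lemma x_antitone (hcmono : Antitone c) (n : ℕ) (hcnn : ∀ j, 0 ≤ c j) :
    Antitone (x κ c n) := by
  intro j j' hjj'
  unfold x
  by_cases h' : j' < NN κ c n
  · rw [if_pos h', if_pos (lt_of_le_of_lt hjj' h')]
    exact mul_le_mul_of_nonneg_left (max_le_max (hcmono hjj') le_rfl)
      (inv_nonneg.mpr (Q_nonneg n))
  · rw [if_neg h']
    split
    · exact mul_nonneg (inv_nonneg.mpr (Q_nonneg n)) (le_trans (hcnn j) (le_max_left _ _))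
    · exact le_refl 0

lemma x_support (n : ℕ) : (Function.support (x κ c n)).Finite := by
  apply Set.Finite.subset (Set.finite_Iio (NN κ c n))
  intro i hi
  simp only [Function.mem_support, x] at hi
  by_contra h
  exact hi (if_neg (by simpa [Set.mem_Iio] using h))

lemma tsum_x_pow (n : ℕ) (r : ℕ) (hr : r ≠ 0) :
    ∑' i, x κ c n i ^ r = (Q κ c n)⁻¹ ^ r * ∑ j ∈ range (NN κ c n), max (c j) (θ n) ^ r := by
  rw [tsum_eq_sum (s := range (NN κ c n)) (by
    intro b hb
    rw [x, if_neg (by simpa using hb), zero_pow hr])]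
  rw [Finset.mul_sum]
  apply Finset.sum_congr rfl
  intro j hj
  rw [x, if_pos (by simpa using hj), mul_pow]

lemma tsum_x_sq (n : ℕ) : ∑' i, x κ c n i ^ 2 = (Q κ c n)⁻¹ := by
  rw [tsum_x_pow n 2 two_ne_zero]
  rcases eq_or_ne (Q κ c n) 0 with h | h
  · simp [h]
  · rw [show ∑ j ∈ range (NN κ c n), max (c j) (θ n) ^ 2 = Q κ c n from rfl]
    field_simp

lemma tsum_x_cube (n : ℕ) : ∑' i, x κ c n i ^ 3 = (Q κ c n)⁻¹ ^ 3 * P3 κ c n :=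
  tsum_x_pow n 3 three_ne_zero


include hcnn hcmono hsum3 in
lemma P3_eq (n : ℕ) :
    P3 κ c n = (∑ j ∈ range (kk c n), c j ^ 3) + (mm κ n : ℝ) * θ n ^ 3 := by
  unfold P3 NN
  rw [range_eq_Ico, ← sum_Ico_consecutive _ (Nat.zero_le (kk c n)) (Nat.le_add_right _ _)]
  congr 1
  · rw [← range_eq_Ico]
    exact Finset.sum_congr rfl fun j hj => by
      rw [max_eq_big (mem_range.mp hj)]
  · have h2 : (∑ j ∈ Ico (kk c n) (kk c n + mm κ n), max (c j) (θ n) ^ 3)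
        = ∑ _j ∈ Ico (kk c n) (kk c n + mm κ n), θ n ^ 3 :=
      Finset.sum_congr rfl fun j hj => by
        rw [max_eq_small hcnn hcmono hsum3 (mem_Ico.mp hj).1]
    rw [h2, Finset.sum_const, Nat.card_Ico, Nat.add_sub_cancel_left, nsmul_eq_mul]

lemma mm_tendsto_real (hκ0 : 0 ≤ κ) :
    Filter.Tendsto (fun n => (mm κ n : ℝ) * θ n ^ 3) atTop (nhds κ) := by
  have hθ3 : Filter.Tendsto (fun n => θ n ^ 3) atTop (nhds 0) := by
    simpa using θ_tendsto.pow 3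
  have hup : Filter.Tendsto (fun n => κ + θ n ^ 3) atTop (nhds κ) := by
    simpa using tendsto_const_nhds.add hθ3
  apply tendsto_of_tendsto_of_tendsto_of_le_of_le (tendsto_const_nhds : Filter.Tendsto (fun _ : ℕ => κ) atTop (nhds κ)) hup
  · intro n
    have h1 : κ * ((n : ℝ) + 1) ^ 3 ≤ (mm κ n : ℝ) := Nat.le_ceil _
    have h2 : κ * ((n : ℝ) + 1) ^ 3 * θ n ^ 3 = κ := by
      unfold θ
      have : ((n : ℝ) + 1) ≠ 0 := by positivity
      field_simp
    calc κ = κ * ((n : ℝ) + 1) ^ 3 * θ n ^ 3 := h2.symm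
    _ ≤ (mm κ n : ℝ) * θ n ^ 3 :=
      mul_le_mul_of_nonneg_right h1 (pow_nonneg (θ_pos n).le 3)
  · intro n
    have h1 : (mm κ n : ℝ) < κ * ((n : ℝ) + 1) ^ 3 + 1 :=
      Nat.ceil_lt_add_one (mul_nonneg hκ0 (by positivity))
    have h2 : κ * ((n : ℝ) + 1) ^ 3 * θ n ^ 3 = κ := by
      unfold θ
      have : ((n : ℝ) + 1) ≠ 0 := by positivity
      field_simp
    have h3 : (mm κ n : ℝ) * θ n ^ 3 ≤ (κ * ((n : ℝ) + 1) ^ 3 + 1) * θ n ^ 3 :=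
      mul_le_mul_of_nonneg_right h1.le (pow_nonneg (θ_pos n).le 3)
    calc (mm κ n : ℝ) * θ n ^ 3 ≤ (κ * ((n : ℝ) + 1) ^ 3 + 1) * θ n ^ 3 := h3
    _ = κ + 1 * θ n ^ 3 := by rw [add_mul, h2]
    _ ≤ κ + θ n ^ 3 := by rw [one_mul]

include hcnn hcmono hsum3 in
lemma S3kk_tendsto :
    Filter.Tendsto (fun n => ∑ j ∈ range (kk c n), c j ^ 3) atTop
      (nhds (∑' j, c j ^ 3)) := by
  set L := ∑' j, c j ^ 3 with hL
  have hle : ∀ k, ∑ j ∈ range k, c j ^ 3 ≤ L := fun k =>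
    hsum3.sum_le_tsum _ (fun i _ => pow_nonneg (hcnn i) 3)
  have hSmono : Monotone (fun k => ∑ j ∈ range k, c j ^ 3) := by
    intro a b hab
    exact Finset.sum_le_sum_of_subset_of_nonneg (range_subset_range.mpr hab)
      (fun i _ _ => pow_nonneg (hcnn i) 3)
  rw [Metric.tendsto_atTop]
  intro ε hε
  have hS : Filter.Tendsto (fun k => ∑ j ∈ range k, c j ^ 3) atTop (nhds L) :=
    hsum3.hasSum.tendsto_sum_nat
  obtain ⟨M, hM⟩ := (Metric.tendsto_atTop.mp hS (ε/2) (by linarith))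
  have hM2 : L - (∑ j ∈ range M, c j ^ 3) < ε / 2 := by
    have := hM M le_rfl
    rw [Real.dist_eq, abs_sub_comm, abs_of_nonneg (by linarith [hle M])] at this
    exact this
  have hθM : Filter.Tendsto (fun n => (M : ℝ) * θ n ^ 3) atTop (nhds 0) := by
    simpa using tendsto_const_nhds.mul (θ_tendsto.pow 3)
  obtain ⟨n₀, hn₀⟩ := Filter.eventually_atTop.mp
    (hθM.eventually_lt_const (show (0:ℝ) < ε/2 by linarith))
  refine ⟨n₀, fun n hn => ?_⟩
  have hkey : L - (∑ j ∈ range (kk c n), c j ^ 3) < ε := by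
    rcases le_or_gt M (kk c n) with hMk | hMk
    · have := hSmono hMk
      linarith
    · have hsplit : (∑ j ∈ range M, c j ^ 3) - (∑ j ∈ range (kk c n), c j ^ 3)
          = ∑ j ∈ Ico (kk c n) M, c j ^ 3 := by
        rw [range_eq_Ico, ← sum_Ico_consecutive _ (Nat.zero_le (kk c n)) hMk.le, range_eq_Ico]
        ring
      have hbound : (∑ j ∈ Ico (kk c n) M, c j ^ 3) ≤ (M : ℝ) * θ n ^ 3 := by
        calc (∑ j ∈ Ico (kk c n) M, c j ^ 3)
            ≤ ∑ _j ∈ Ico (kk c n) M, θ n ^ 3 := by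
              apply Finset.sum_le_sum
              intro j hj
              have hjk : kk c n ≤ j := (mem_Ico.mp hj).1
              have : c j < θ n := lt_of_le_of_lt (hcmono hjk) (c_kk_lt hcnn hsum3 n)
              exact pow_le_pow_left₀ (hcnn j) this.le 3
        _ = ((Ico (kk c n) M).card : ℝ) * θ n ^ 3 := by
              rw [Finset.sum_const, nsmul_eq_mul]
        _ ≤ (M : ℝ) * θ n ^ 3 := by
              apply mul_le_mul_of_nonneg_right _ (pow_nonneg (θ_pos n).le 3)
              exact_mod_cast Nat.card_Ico (kk c n) M ▸
                Nat.cast_le.mpr (Nat.sub_le M (kk c n))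
      have := hn₀ n hn
      linarith
  rw [Real.dist_eq, abs_sub_comm, abs_of_nonneg (by linarith [hle (kk c n)])]
  exact hkey


lemma kappa_lin_tendsto (hκ : 0 < κ) :
    Filter.Tendsto (fun n : ℕ => κ * ((n : ℝ) + 1)) atTop atTop := by
  apply Filter.Tendsto.const_mul_atTop hκ
  exact tendsto_atTop_add_const_right _ 1 tendsto_natCast_atTop_atTop

lemma mm_ge (hκ0 : 0 ≤ κ) (n : ℕ) : κ * ((n : ℝ) + 1) ≤ (mm κ n : ℝ) := by
  have h1 : κ * ((n : ℝ) + 1) ≤ κ * ((n : ℝ) + 1) ^ 3 := by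
    apply mul_le_mul_of_nonneg_left _ hκ0
    have h0 : (1:ℝ) ≤ (n:ℝ) + 1 := by linarith [Nat.cast_nonneg (α := ℝ) n]
    nlinarith [h0, sq_nonneg ((n:ℝ) + 1), mul_le_mul_of_nonneg_left h0 (by linarith : (0:ℝ) ≤ (n:ℝ)+1)]
  exact le_trans h1 (Nat.le_ceil _)

include hcnn hcmono hsum3 in
lemma Q_ge_mm (n : ℕ) : (mm κ n : ℝ) * θ n ^ 2 ≤ Q κ c n := by
  have h1 : ∀ j ∈ range (NN κ c n), θ n ^ 2 ≤ max (c j) (θ n) ^ 2 := fun j _ =>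
    pow_le_pow_left₀ (θ_pos n).le (le_max_right _ _) 2
  calc (mm κ n : ℝ) * θ n ^ 2 ≤ (NN κ c n : ℝ) * θ n ^ 2 := by
        apply mul_le_mul_of_nonneg_right _ (pow_nonneg (θ_pos n).le 2)
        exact_mod_cast Nat.le_add_left _ _
  _ = ∑ _j ∈ range (NN κ c n), θ n ^ 2 := by
        rw [Finset.sum_const, Finset.card_range, nsmul_eq_mul]
  _ ≤ Q κ c n := Finset.sum_le_sum h1

include hcnn hcmono hsum3 in
lemma Q_tendsto_pos (hκ : 0 < κ) : Filter.Tendsto (Q κ c) atTop atTop := by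
  apply tendsto_atTop_mono _ (kappa_lin_tendsto hκ)
  intro n
  have h2 : κ * ((n : ℝ) + 1) ≤ (mm κ n : ℝ) * θ n ^ 2 := by
    have := mm_ge hκ.le n
    have hθ : θ n ^ 2 = (((n:ℝ)+1) ^ 2)⁻¹ := by
      unfold θ; rw [inv_pow]
    have hn1 : (0:ℝ) < (n:ℝ) + 1 := by positivity
    calc κ * ((n : ℝ) + 1) = κ * ((n : ℝ) + 1) ^ 3 * (((n:ℝ)+1) ^ 2)⁻¹ := by
          field_simp
    _ ≤ (mm κ n : ℝ) * (((n:ℝ)+1) ^ 2)⁻¹ :=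
          mul_le_mul_of_nonneg_right (Nat.le_ceil _) (by positivity)
    _ = (mm κ n : ℝ) * θ n ^ 2 := by rw [hθ]
  exact le_trans h2 (Q_ge_mm hcnn hcmono hsum3 n)

omit hsum3 in
include hcnn hcmono in
lemma c_pos (hns2 : ¬ Summable (fun j => c j ^ 2)) : ∀ j, 0 < c j := by
  intro j
  rcases lt_or_eq_of_le (hcnn j) with h | h
  · exact h
  · exfalso
    apply hns2
    apply summable_of_ne_finset_zero (s := range (j+1))
    intro i hi
    have hij : j ≤ i := by
      by_contra hc
      exact hi (mem_range.mpr (by omega))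
    have : c i ≤ 0 := h ▸ hcmono hij
    have : c i = 0 := le_antisymm this (hcnn i)
    simp [this]

include hcnn hcmono hsum3 in
lemma kk_tendsto (hpos : ∀ j, 0 < c j) : Filter.Tendsto (kk c) atTop atTop := by
  rw [tendsto_atTop]
  intro M
  have hev : ∀ᶠ n in atTop, θ n < c M := θ_tendsto.eventually_lt_const (hpos M)
  filter_upwards [hev] with n hn
  by_contra h
  push_neg at h
  have hkM : kk c n ≤ M := by omega
  have : c M ≤ c (kk c n) := hcmono hkM
  have := c_kk_lt hcnn hsum3 n
  linarith

include hcnn hcmono hsum3 in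
lemma Q_ge_kk (n : ℕ) : (∑ j ∈ range (kk c n), c j ^ 2) ≤ Q κ c n := by
  have hsub : range (kk c n) ⊆ range (NN κ c n) :=
    range_subset_range.mpr (Nat.le_add_right _ _)
  calc (∑ j ∈ range (kk c n), c j ^ 2)
      = ∑ j ∈ range (kk c n), max (c j) (θ n) ^ 2 :=
        Finset.sum_congr rfl fun j hj => by rw [max_eq_big (mem_range.mp hj)]
  _ ≤ Q κ c n :=
        Finset.sum_le_sum_of_subset_of_nonneg hsub fun i _ _ => sq_nonneg _

include hcnn hcmono hsum3 in
lemma Q_tendsto_zero_case (hns2 : ¬ Summable (fun j => c j ^ 2)) :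
    Filter.Tendsto (Q κ c) atTop atTop := by
  have hA : Filter.Tendsto (fun k => ∑ j ∈ range k, c j ^ 2) atTop atTop :=
    (not_summable_iff_tendsto_nat_atTop_of_nonneg (fun j => sq_nonneg _)).mp hns2
  have hkk := kk_tendsto hcnn hcmono hsum3 (c_pos hcnn hcmono hns2)
  exact tendsto_atTop_mono (fun n => Q_ge_kk hcnn hcmono hsum3 n) (hA.comp hkk)

include hcnn hcmono hsum3 in
lemma NN_tendsto
    (hcase : (0 < κ ∧ Summable (fun j => c j ^ 3)) ∨
      (κ = 0 ∧ Summable (fun j => c j ^ 3) ∧ ¬ Summable (fun j => c j ^ 2))) :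
    Filter.Tendsto (NN κ c) atTop atTop := by
  rcases hcase with ⟨hκ, _⟩ | ⟨hκ, _, hns2⟩
  · apply tendsto_atTop_mono (fun n => Nat.le_add_left (mm κ n) (kk c n))
    rw [← tendsto_natCast_atTop_iff (R := ℝ)]
    exact tendsto_atTop_mono (mm_ge hκ.le) (kappa_lin_tendsto hκ)
  · exact tendsto_atTop_mono (fun n => Nat.le_add_right (kk c n) (mm κ n))
      (kk_tendsto hcnn hcmono hsum3 (c_pos hcnn hcmono hns2))

end Stmt16


end Stmt16Aux

open Stmt16

/-- Existence of approximating finite configurations for every point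
`(κ, 0, c)` of the entrance-boundary parameter space: either `κ > 0` and
`c ∈ l³`, or `κ = 0` and `c ∈ l³ \ l²`. -/
theorem stmt16 (κ : ℝ) (c : ℕ → ℝ) (hcnn : ∀ j, 0 ≤ c j) (hcmono : Antitone c)
    (hcase : (0 < κ ∧ Summable (fun j => c j ^ 3)) ∨
      (κ = 0 ∧ Summable (fun j => c j ^ 3) ∧ ¬ Summable (fun j => c j ^ 2))) :
    ∃ x : ℕ → ℕ → ℝ,
      (∀ n i, 0 ≤ x n i) ∧ (∀ n, Antitone (x n)) ∧
      (∀ n, (Function.support (x n)).Finite) ∧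
      Tendsto (fun n => (∑' i, x n i ^ 3) / (∑' i, x n i ^ 2) ^ 3) atTop
        (nhds (κ + ∑' j, c j ^ 3)) ∧
      (∀ j, Tendsto (fun n => x n j / ∑' i, x n i ^ 2) atTop (nhds (c j))) ∧
      Tendsto (fun n => ∑' i, x n i ^ 2) atTop (nhds 0) := by

  have hsum3 : Summable (fun j => c j ^ 3) := by
    rcases hcase with ⟨_, h⟩ | ⟨_, h, _⟩ <;> exact h
  have hκ0 : 0 ≤ κ := by
    rcases hcase with ⟨h, _⟩ | ⟨h, _⟩
    · exact h.le
    · exact le_of_eq h.symm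
  have hQtop : Tendsto (Q κ c) atTop atTop := by
    rcases hcase with ⟨hκ, _⟩ | ⟨hκ, _, hns2⟩
    · exact Q_tendsto_pos hcnn hcmono hsum3 hκ
    · exact Q_tendsto_zero_case hcnn hcmono hsum3 hns2
  have hNN : Tendsto (NN κ c) atTop atTop := NN_tendsto hcnn hcmono hsum3 hcase
  have hQpos : ∀ᶠ n in atTop, 0 < Q κ c n := hQtop.eventually_gt_atTop 0
  refine ⟨x κ c, fun n i => x_nonneg hcnn n i, fun n => x_antitone hcmono n hcnn,
    fun n => x_support n, ?_, ?_, ?_⟩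
  · -- σ₃/σ₂³
    have hP : Tendsto (fun n => (∑ j ∈ range (kk c n), c j ^ 3) + (mm κ n : ℝ) * θ n ^ 3)
        atTop (nhds ((∑' j, c j ^ 3) + κ)) :=
      (S3kk_tendsto hcnn hcmono hsum3).add (mm_tendsto_real hκ0)
    rw [add_comm κ]
    apply hP.congr'
    filter_upwards [hQpos] with n hQ
    rw [← P3_eq hcnn hcmono hsum3 n, tsum_x_cube, tsum_x_sq]
    exact (mul_div_cancel_left₀ _ (pow_ne_zero 3 (inv_ne_zero hQ.ne'))).symm
  · -- x j / σ₂ → c j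
    intro j
    have hmax : Tendsto (fun n => max (c j) (θ n)) atTop (nhds (c j)) := by
      have := (tendsto_const_nhds (x := c j) (f := atTop (α := ℕ))).max θ_tendsto
      simpa [max_eq_left (hcnn j)] using this
    apply hmax.congr'
    filter_upwards [hQpos, hNN.eventually_gt_atTop j] with n hQ hj
    rw [tsum_x_sq, x, if_pos hj]
    exact (mul_div_cancel_left₀ _ (inv_ne_zero hQ.ne')).symm
  · -- σ₂ → 0
    simp only [tsum_x_sq]
    exact tendsto_inv_atTop_zero.comp hQtop
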